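/- arXiv:1506.04534 — 3 statements merged into one kernel-verified Lean document; each statement's English description precedes it below -/
import Mathlib

section
/- Let K ≥ 0 and let f : ℝ → ℝ be K-Lipschitz. If limsup_{n→∞} f(4·(log n)²)/log n ≤ 1 (the limsup taken over natural numbers n ≥ 2), then limsup_{t→∞} f(t)/√(t/4) ≤ 1. -/
open Filter

set_option maxHeartbeats 1000000

/-- **Sampling/continuity step.** If `f : ℝ → ℝ` is `K`-Lipschitz (with `K ≥ 0`) and the
limsup over natural numbers `n` of `f (4·(log n)²) / log n` is at most `1`, then
`limsup_{t→∞} f t / √(t/4) ≤ 1`. -/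
theorem limsup_sampled_implies_limsup_continuous
    (K : NNReal) (f : ℝ → ℝ) (hf : LipschitzWith K f)
    (hsample :
      Filter.limsup
        (fun n : ℕ => ((f (4 * (Real.log n) ^ 2) / Real.log n : ℝ) : EReal))
        Filter.atTop ≤ (1 : EReal)) :
    Filter.limsup (fun t : ℝ => ((f t / Real.sqrt (t / 4) : ℝ) : EReal))
      Filter.atTop ≤ (1 : EReal) := by
  have key : ∀ ε : ℝ, 0 < ε → ∀ᶠ t : ℝ in atTop,
      ((f t / Real.sqrt (t / 4) : ℝ) : EReal) ≤ ((1 + ε : ℝ) : EReal) := by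
    intro ε hε
    have hlt : Filter.limsup
        (fun n : ℕ => ((f (4 * (Real.log n) ^ 2) / Real.log n : ℝ) : EReal))
        Filter.atTop < ((1 + ε / 2 : ℝ) : EReal) := by
      refine lt_of_le_of_lt hsample ?_
      have h1 : (1 : ℝ) < 1 + ε / 2 := by linarith
      exact_mod_cast h1
    have hev := Filter.eventually_lt_of_limsup_lt hlt
    rw [eventually_atTop] at hev
    obtain ⟨N₀, hN₀⟩ := hev
    set N : ℕ := max (max 2 N₀) (⌈24 * (K : ℝ) / ε⌉₊ + 1) with hN
    filter_upwards [eventually_ge_atTop (4 * (Real.log N) ^ 2 : ℝ)] with t ht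
    have ht0 : (0 : ℝ) ≤ t := le_trans (by positivity) ht
    set s := Real.sqrt (t / 4) with hs
    have hs0 : 0 ≤ s := Real.sqrt_nonneg _
    have hs2 : s ^ 2 = t / 4 := Real.sq_sqrt (by linarith)
    have hN2 : 2 ≤ N := le_trans (le_max_left 2 N₀) (le_max_left _ _)
    have hNR : (1 : ℝ) ≤ (N : ℝ) := by exact_mod_cast le_trans (by norm_num) hN2
    have hlogN0 : 0 ≤ Real.log N := Real.log_nonneg hNR
    have hslog : Real.log N ≤ s := by
      have h1 : (Real.log N) ^ 2 ≤ t / 4 := by linarith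
      calc Real.log N = Real.sqrt ((Real.log N) ^ 2) := (Real.sqrt_sq hlogN0).symm
        _ ≤ s := Real.sqrt_le_sqrt h1
    set n : ℕ := ⌊Real.exp s⌋₊ with hn
    have hn_ge : N ≤ n := by
      refine Nat.le_floor ?_
      calc (N : ℝ) = Real.exp (Real.log N) := (Real.exp_log (by linarith)).symm
        _ ≤ Real.exp s := Real.exp_le_exp.mpr hslog
    have hn2 : 2 ≤ n := le_trans hN2 hn_ge
    have hn1R : (1 : ℝ) < (n : ℝ) := by exact_mod_cast hn2
    have hnpos : (0 : ℝ) < (n : ℝ) := by linarith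
    have hlogn_pos : 0 < Real.log n := Real.log_pos hn1R
    have hlow : Real.log n ≤ s := by
      have h1 : (n : ℝ) ≤ Real.exp s := Nat.floor_le (Real.exp_pos s).le
      calc Real.log n ≤ Real.log (Real.exp s) := Real.log_le_log hnpos h1
        _ = s := Real.log_exp s
    have hhigh : s ≤ Real.log (n + 1 : ℕ) := by
      have h1 : Real.exp s < ((n + 1 : ℕ) : ℝ) := by
        push_cast
        exact Nat.lt_floor_add_one (Real.exp s)
      calc s = Real.log (Real.exp s) := (Real.log_exp s).symm
        _ ≤ Real.log (n + 1 : ℕ) := (Real.log_lt_log (Real.exp_pos s) h1).le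
    have ht_low : 4 * (Real.log n) ^ 2 ≤ t := by
      have : (Real.log n) ^ 2 ≤ s ^ 2 := by nlinarith [hlogn_pos]
      linarith [hs2, this]
    have ht_high : t ≤ 4 * (Real.log (n + 1 : ℕ)) ^ 2 := by
      have : s ^ 2 ≤ (Real.log (n + 1 : ℕ)) ^ 2 := by nlinarith
      linarith [hs2, this]
    -- Lipschitz bound
    have hlip : f t ≤ f (4 * (Real.log n) ^ 2) + (K : ℝ) * (t - 4 * (Real.log n) ^ 2) := by
      have h1 := hf.dist_le_mul t (4 * (Real.log n) ^ 2)
      rw [Real.dist_eq, Real.dist_eq] at h1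
      have h2 : |t - 4 * (Real.log n) ^ 2| = t - 4 * (Real.log n) ^ 2 :=
        abs_of_nonneg (by linarith)
      rw [h2] at h1
      have := le_of_abs_le h1
      linarith [abs_le.mp h1]
    -- sample bound
    have hsample_n : f (4 * (Real.log n) ^ 2) < (1 + ε / 2) * Real.log n := by
      have h1 := hN₀ n (le_trans (le_trans (le_max_right 2 N₀) (le_max_left _ _)) hn_ge)
      have h2 : f (4 * (Real.log n) ^ 2) / Real.log n < 1 + ε / 2 := by exact_mod_cast h1
      exact (div_lt_iff₀ hlogn_pos).mp h2
    -- gap bound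
    have hgap : (K : ℝ) * (t - 4 * (Real.log n) ^ 2) ≤ (ε / 2) * Real.log n := by
      have hK0 : (0 : ℝ) ≤ (K : ℝ) := K.coe_nonneg
      have hstep : Real.log (n + 1 : ℕ) - Real.log n ≤ 1 / n := by
        have hd : Real.log (n + 1 : ℕ) - Real.log n
            = Real.log (((n + 1 : ℕ) : ℝ) / n) := by
          rw [Real.log_div (by positivity) (ne_of_gt hnpos)]
        rw [hd]
        have := Real.log_le_sub_one_of_pos (x := ((n + 1 : ℕ) : ℝ) / n) (by positivity)
        have heq : ((n + 1 : ℕ) : ℝ) / n - 1 = 1 / n := by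
          push_cast
          field_simp
          ring
        linarith [heq ▸ this]
      have hdouble : Real.log (n + 1 : ℕ) ≤ 2 * Real.log n := by
        have hn2R : (2 : ℝ) ≤ (n : ℝ) := by exact_mod_cast hn2
        have h1 : ((n + 1 : ℕ) : ℝ) ≤ (n : ℝ) ^ 2 := by
          push_cast
          nlinarith [hn2R]
        calc Real.log (n + 1 : ℕ) ≤ Real.log ((n : ℝ) ^ 2) :=
              Real.log_le_log (by positivity) h1
          _ = 2 * Real.log n := by rw [Real.log_pow]; push_cast; ring
      have hdelta : t - 4 * (Real.log n) ^ 2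
          ≤ 12 * Real.log n * (1 / n) := by
        have hfac : 4 * (Real.log (n + 1 : ℕ)) ^ 2 - 4 * (Real.log n) ^ 2
            = 4 * (Real.log (n + 1 : ℕ) - Real.log n)
              * (Real.log (n + 1 : ℕ) + Real.log n) := by ring
        have hsum : Real.log (n + 1 : ℕ) + Real.log n ≤ 3 * Real.log n := by linarith
        have hdiff0 : 0 ≤ Real.log (n + 1 : ℕ) - Real.log n := by
          have : Real.log n ≤ Real.log (n + 1 : ℕ) :=
            Real.log_le_log hnpos (by push_cast; linarith)
          linarith
        nlinarith [hstep, hsum, hdiff0, hlogn_pos, ht_high]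
      have hn24 : 24 * (K : ℝ) / ε ≤ (n : ℝ) := by
        have h1 : (⌈24 * (K : ℝ) / ε⌉₊ + 1 : ℕ) ≤ n :=
          le_trans (le_trans (le_max_right _ _) le_rfl) hn_ge
        have h2 : 24 * (K : ℝ) / ε ≤ (⌈24 * (K : ℝ) / ε⌉₊ : ℝ) := Nat.le_ceil _
        have h3 : ((⌈24 * (K : ℝ) / ε⌉₊ : ℕ) : ℝ) ≤ (n : ℝ) := by
          exact Nat.cast_le.mpr (le_trans (Nat.le_succ _) h1)
        linarith
      have hKn : 12 * (K : ℝ) * (1 / n) ≤ ε / 2 := by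
        rw [div_le_iff₀ hε] at hn24
        rw [mul_one_div, div_le_div_iff₀ hnpos (by norm_num : (0:ℝ) < 2)]
        linarith
      have h0 : 0 ≤ t - 4 * (Real.log n) ^ 2 := by linarith
      calc (K : ℝ) * (t - 4 * (Real.log n) ^ 2)
          ≤ (K : ℝ) * (12 * Real.log n * (1 / n)) :=
            mul_le_mul_of_nonneg_left hdelta hK0
        _ = (12 * (K : ℝ) * (1 / n)) * Real.log n := by ring
        _ ≤ (ε / 2) * Real.log n :=
            mul_le_mul_of_nonneg_right hKn hlogn_pos.le
    have hft : f t ≤ (1 + ε) * s := by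
      have h1 : f t ≤ (1 + ε) * Real.log n := by linarith
      have h2 : (1 + ε) * Real.log n ≤ (1 + ε) * s := by nlinarith [hlogn_pos, hlow]
      linarith
    have hspos : 0 < s := lt_of_lt_of_le hlogn_pos hlow
    have hdiv : f t / s ≤ 1 + ε := (div_le_iff₀ hspos).mpr (by linarith)
    exact_mod_cast hdiv
  by_contra h
  push_neg at h
  obtain ⟨x, hx1, hx2⟩ := EReal.lt_iff_exists_real_btwn.mp h
  have hx1' : (1 : ℝ) < x := by exact_mod_cast hx1
  have hle := Filter.limsup_le_of_le (by isBoundedDefault) (key (x - 1) (by linarith))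
  have : ((1 + (x - 1) : ℝ) : EReal) = ((x : ℝ) : EReal) := by norm_num
  rw [this] at hle
  exact absurd hx2 (not_lt.mpr hle)
end

section
/- Let (Ω, F, μ) be a probability space, let (T_t)_{t∈ℝ} be a family of measure-preserving measurable maps T_t : Ω → Ω, and let Y : Ω → ℝ be measurable. Suppose there exist C > 0 and r₀ > 0 such that μ{ω : Y(ω) > r} ≤ C·e^{−r}/r for all r ≥ r₀, and suppose there is K ≥ 0 such that for every ω ∈ Ω the function t ↦ Y(T_t ω) is K-Lipschitz on ℝ. Then for μ-almost every ω ∈ Ω, limsup_{t→∞} Y(T_t ω)/√(t/4) ≤ 1. -/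
open MeasureTheory Filter
open scoped ENNReal NNReal

lemma sqrt_quarter (t : ℝ) : Real.sqrt (t / 4) = Real.sqrt t / 2 := by
  rw [Real.sqrt_div' t (by norm_num : (0:ℝ) ≤ 4),
    show (4:ℝ) = 2 ^ 2 by norm_num, Real.sqrt_sq (by norm_num : (0:ℝ) ≤ 2)]

lemma tail_est (C : ℝ) (hC : 0 < C) (r : ℝ) (hr : 1 / 2 ≤ r) (n : ℕ)
    (hrn : r ^ 4 = (n : ℝ) ^ 2 / 16) (hn : 1 ≤ n) :
    C * Real.exp (-r) / r ≤ 8192 * C / (n : ℝ) ^ 2 := by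
  have hr0 : 0 < r := lt_of_lt_of_le (by norm_num) hr
  have hn0 : (0 : ℝ) < (n : ℝ) ^ 2 := by positivity
  have hexp : r ^ 4 / 256 ≤ Real.exp r := by
    have h1 : r / 4 ≤ Real.exp (r / 4) := by
      have := Real.add_one_le_exp (r / 4); linarith
    have h2 : (r / 4) ^ 4 ≤ Real.exp (r / 4) ^ 4 :=
      pow_le_pow_left₀ (by positivity) h1 4
    have h3 : Real.exp (r / 4) ^ 4 = Real.exp r := by
      rw [← Real.exp_nat_mul]; push_cast; ring_nf
    rw [h3] at h2
    calc r ^ 4 / 256 = (r / 4) ^ 4 := by ring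
      _ ≤ Real.exp r := h2
  have hexp0 : (0:ℝ) < r ^ 4 / 256 := by positivity
  have h4 : Real.exp (-r) ≤ 256 / r ^ 4 := by
    calc Real.exp (-r) = (Real.exp r)⁻¹ := Real.exp_neg r
      _ ≤ (r ^ 4 / 256)⁻¹ := inv_anti₀ hexp0 hexp
      _ = 256 / r ^ 4 := by rw [inv_div]
  have h5 : C * Real.exp (-r) / r ≤ C * (256 / r ^ 4) / r := by gcongr
  calc C * Real.exp (-r) / r ≤ C * (256 / r ^ 4) / r := h5
    _ = 256 * C / (r ^ 4 * r) := by ring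
    _ ≤ 8192 * C / (n : ℝ) ^ 2 := by
        rw [div_le_div_iff₀ (by positivity) hn0]
        have h6 : (n:ℝ) ^ 2 / 32 ≤ r ^ 4 * r := by
          have : (n:ℝ) ^ 2 / 16 * (1 / 2) ≤ r ^ 4 * r := by
            rw [← hrn]; gcongr
          linarith
        nlinarith

lemma sqrt_quarter_tendsto : Tendsto (fun t : ℝ => Real.sqrt (t / 4)) atTop atTop := by
  apply tendsto_atTop_atTop.2
  intro b
  refine ⟨4 * b ^ 2, fun t ht => ?_⟩
  have h1 : b ^ 2 ≤ t / 4 := by linarith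
  calc b ≤ |b| := le_abs_self b
    _ = Real.sqrt (b ^ 2) := (Real.sqrt_sq_eq_abs b).symm
    _ ≤ Real.sqrt (t / 4) := Real.sqrt_le_sqrt h1

/-- **Logarithm law upper bound for a measure-preserving flow.** Let `(Ω, μ)` be a
probability space, `T t : Ω → Ω` a family of measure-preserving maps, and `Y : Ω → ℝ`
measurable with tail bound `μ {Y > r} ≤ C·e^{-r}/r` for `r ≥ r₀`. If for every `ω` the
map `t ↦ Y (T t ω)` is `K`-Lipschitz, then for `μ`-almost every `ω`,
`limsup_{t→∞} Y (T t ω) / √(t/4) ≤ 1`. -/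
theorem flow_log_law_upper_bound
    {Ω : Type*} [MeasurableSpace Ω] (μ : Measure Ω) [IsProbabilityMeasure μ]
    (T : ℝ → Ω → Ω) (hT : ∀ t : ℝ, MeasurePreserving (T t) μ μ)
    (Y : Ω → ℝ) (hY : Measurable Y)
    (C r₀ : ℝ) (hC : 0 < C) (hr₀ : 0 < r₀)
    (htail : ∀ r : ℝ, r₀ ≤ r → μ {ω | Y ω > r} ≤ ENNReal.ofReal (C * Real.exp (-r) / r))
    (K : NNReal) (hLip : ∀ ω : Ω, LipschitzWith K (fun t : ℝ => Y (T t ω))) :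
    ∀ᵐ ω ∂μ,
      Filter.limsup (fun t : ℝ => ((Y (T t ω) / Real.sqrt (t / 4) : ℝ) : EReal))
        Filter.atTop ≤ (1 : EReal) := by
  classical
  set s : ℕ → Set Ω := fun n => {ω | Y (T (n : ℝ) ω) > Real.sqrt n / 2} with hs_def
  set N₀ : ℕ := ⌈(2 * r₀) ^ 2⌉₊ + 1 with hN₀_def
  -- pointwise bound on the measures
  have hmeas : ∀ n : ℕ, N₀ ≤ n → μ (s n) ≤ ENNReal.ofReal (8192 * C / (n : ℝ) ^ 2) := by
    intro n hn
    have hn1 : 1 ≤ n := le_trans (by omega) hn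
    have hnR : (2 * r₀) ^ 2 ≤ (n : ℝ) := by
      calc (2 * r₀) ^ 2 ≤ (⌈(2 * r₀) ^ 2⌉₊ : ℝ) := Nat.le_ceil _
        _ ≤ (n : ℝ) := by exact_mod_cast le_trans (by omega) hn
    have hr_ge : r₀ ≤ Real.sqrt n / 2 := by
      have h1 : Real.sqrt ((2 * r₀) ^ 2) ≤ Real.sqrt n := Real.sqrt_le_sqrt hnR
      rw [Real.sqrt_sq (by positivity)] at h1
      linarith
    have hr_half : 1 / 2 ≤ Real.sqrt n / 2 := by
      have h1 : Real.sqrt 1 ≤ Real.sqrt n := Real.sqrt_le_sqrt (by exact_mod_cast hn1)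
      rw [Real.sqrt_one] at h1
      linarith
    have hpre : s n = T (n : ℝ) ⁻¹' {ω | Y ω > Real.sqrt n / 2} := rfl
    have hms : MeasurableSet {ω | Y ω > Real.sqrt n / 2} :=
      measurableSet_lt measurable_const hY
    have h1 : μ (s n) = μ {ω | Y ω > Real.sqrt n / 2} := by
      rw [hpre, (hT (n : ℝ)).measure_preimage hms.nullMeasurableSet]
    rw [h1]
    refine le_trans (htail _ hr_ge) (ENNReal.ofReal_le_ofReal ?_)
    have hrn : (Real.sqrt n / 2) ^ 4 = (n : ℝ) ^ 2 / 16 := by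
      have := Real.sq_sqrt (Nat.cast_nonneg n : (0:ℝ) ≤ n)
      nlinarith [this]
    exact tail_est C hC _ hr_half n hrn hn1
  -- summability
  have hsum : (∑' n, μ (s n)) ≠ ⊤ := by
    have hb : ∀ n : ℕ, μ (s n) ≤
        (Set.indicator ((Finset.range N₀ : Set ℕ)) (fun _ => (1 : ℝ≥0∞)) n) +
          ENNReal.ofReal (8192 * C / (n : ℝ) ^ 2) := by
      intro n
      by_cases hn : n < N₀
      · have : Set.indicator ((Finset.range N₀ : Set ℕ)) (fun _ => (1 : ℝ≥0∞)) n = 1 := by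
          rw [Set.indicator_of_mem]; simpa using hn
        rw [this]
        exact le_add_right prob_le_one
      · exact le_add_left (hmeas n (not_lt.1 hn))
    have hsummable : Summable (fun n : ℕ => 8192 * C / (n : ℝ) ^ 2) := by
      have h := Real.summable_one_div_nat_pow.2 (le_refl 2)
      simpa [div_eq_mul_inv, mul_assoc, one_div] using h.mul_left (8192 * C)
    have hlt : (∑' n, μ (s n)) < ⊤ := calc (∑' n, μ (s n))
        ≤ ∑' n : ℕ, ((Set.indicator ((Finset.range N₀ : Set ℕ)) (fun _ => (1 : ℝ≥0∞)) n) +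
            ENNReal.ofReal (8192 * C / (n : ℝ) ^ 2)) := ENNReal.tsum_le_tsum hb
      _ = (∑' n : ℕ, Set.indicator ((Finset.range N₀ : Set ℕ)) (fun _ => (1 : ℝ≥0∞)) n) +
            ∑' n : ℕ, ENNReal.ofReal (8192 * C / (n : ℝ) ^ 2) := ENNReal.tsum_add
      _ < ⊤ := by
          apply ENNReal.add_lt_top.2
          constructor
          · rw [tsum_eq_sum (s := Finset.range N₀)
              (fun b hb => Set.indicator_of_notMem (by simpa using hb) _)]
            refine ENNReal.sum_lt_top.2 ?_
            intro a _
            by_cases h : a ∈ (Finset.range N₀ : Set ℕ)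
            · rw [Set.indicator_of_mem h]; exact ENNReal.one_lt_top
            · rw [Set.indicator_of_notMem h]; exact ENNReal.zero_lt_top
          · rw [← ENNReal.ofReal_tsum_of_nonneg (fun n => by positivity) hsummable]
            exact ENNReal.ofReal_lt_top
    exact hlt.ne
  -- Borel–Cantelli
  have hBC : ∀ᵐ ω ∂μ, ∀ᶠ n : ℕ in atTop, ω ∉ s n := ae_eventually_notMem hsum
  filter_upwards [hBC] with ω hω
  obtain ⟨N, hN⟩ := eventually_atTop.1 hω
  -- eventual pointwise bound for real times
  have key : ∀ᶠ t : ℝ in atTop,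
      ((Y (T t ω) / Real.sqrt (t / 4) : ℝ) : EReal) ≤
        ((1 + (K : ℝ) / Real.sqrt (t / 4) : ℝ) : EReal) := by
    filter_upwards [eventually_ge_atTop ((N : ℝ) + 1), eventually_ge_atTop (1 : ℝ)]
      with t htN ht1
    have ht0 : (0 : ℝ) < t := lt_of_lt_of_le one_pos ht1
    set n : ℕ := ⌊t⌋₊ with hn_def
    have hnt : (n : ℝ) ≤ t := Nat.floor_le ht0.le
    have htn : t < (n : ℝ) + 1 := Nat.lt_floor_add_one t
    have hNn : N ≤ n := Nat.le_floor (by exact_mod_cast by linarith : (N : ℝ) ≤ (t : ℝ))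
    have hYn : Y (T (n : ℝ) ω) ≤ Real.sqrt n / 2 := not_lt.1 (hN n hNn)
    have hdist := (hLip ω).dist_le_mul t (n : ℝ)
    rw [Real.dist_eq, Real.dist_eq] at hdist
    have habs : |t - (n : ℝ)| ≤ 1 := by
      rw [abs_of_nonneg (by linarith)]; linarith
    have h1 : Y (T t ω) ≤ Y (T (n : ℝ) ω) + (K : ℝ) := by
      have h2 := (abs_le.1 hdist).2
      have h3 : (K : ℝ) * |t - (n : ℝ)| ≤ (K : ℝ) * 1 :=
        mul_le_mul_of_nonneg_left habs K.coe_nonneg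
      linarith
    have hd : (0 : ℝ) < Real.sqrt (t / 4) := Real.sqrt_pos.2 (by linarith)
    have h2 : Y (T t ω) ≤ Real.sqrt (t / 4) + (K : ℝ) := by
      have hsq : Real.sqrt (n : ℝ) ≤ Real.sqrt t := Real.sqrt_le_sqrt hnt
      rw [sqrt_quarter]
      linarith
    have h3 : Y (T t ω) / Real.sqrt (t / 4) ≤ 1 + (K : ℝ) / Real.sqrt (t / 4) := by
      rw [div_le_iff₀ hd]
      have : (1 + (K : ℝ) / Real.sqrt (t / 4)) * Real.sqrt (t / 4)
          = Real.sqrt (t / 4) + (K : ℝ) := by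
        field_simp
      rw [this]; exact h2
    exact_mod_cast h3
  -- the comparison function tends to 1
  have hg : Tendsto (fun t : ℝ => ((1 + (K : ℝ) / Real.sqrt (t / 4) : ℝ) : EReal))
      atTop (nhds (1 : EReal)) := by
    have hreal : Tendsto (fun t : ℝ => 1 + (K : ℝ) / Real.sqrt (t / 4)) atTop (nhds 1) := by
      have h0 : Tendsto (fun t : ℝ => (K : ℝ) / Real.sqrt (t / 4)) atTop (nhds 0) :=
        Tendsto.div_atTop tendsto_const_nhds sqrt_quarter_tendsto
      have := tendsto_const_nhds.add h0 (f := fun _ : ℝ => (1 : ℝ)) (x := atTop)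
      simpa using this
    have := (continuous_coe_real_ereal.tendsto 1).comp hreal
    exact this
  calc Filter.limsup (fun t : ℝ => ((Y (T t ω) / Real.sqrt (t / 4) : ℝ) : EReal)) atTop
      ≤ Filter.limsup (fun t : ℝ => ((1 + (K : ℝ) / Real.sqrt (t / 4) : ℝ) : EReal)) atTop :=
        limsup_le_limsup key
    _ = 1 := hg.limsup_eq
end

section
/- Define R : (0,∞) → ℝ by R(x) = 2·log((e^{x/2}+1)/(e^{x/2}−1)). Fix q > 0 and let a : ℝ → ℝ be a function such that a(L) > 0 and q·R(a(L)) < L < q·R(a(L)) + q·a(L)/2 for all sufficiently large L, and such that a(L) → 0 as L → ∞. Then lim_{L→∞} a(L)·e^{L/(2q)} = 4. -/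
open Filter

/-- The collar (injectivity-radius) function of a simple closed geodesic of length `x`
on a hyperbolic once-punctured torus: `R x = 2·log((e^{x/2}+1)/(e^{x/2}-1))`. -/
noncomputable def collarRadius (x : ℝ) : ℝ :=
  2 * Real.log ((Real.exp (x / 2) + 1) / (Real.exp (x / 2) - 1))

/-- **Asymptotics of the systole estimate.** Fix `q > 0`. If `a : ℝ → ℝ` satisfies
`a L > 0` and `q·R(a L) < L < q·R(a L) + q·(a L)/2` for all sufficiently large `L`, and
`a L → 0` as `L → ∞`, then `a L · e^{L/(2q)} → 4`. -/
theorem systole_asymptotic_four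
    (q : ℝ) (hq : 0 < q) (a : ℝ → ℝ)
    (ha : ∀ᶠ L in Filter.atTop,
      0 < a L ∧ q * collarRadius (a L) < L ∧ L < q * collarRadius (a L) + q * a L / 2)
    (ha0 : Filter.Tendsto a Filter.atTop (nhds 0)) :
    Filter.Tendsto (fun L : ℝ => a L * Real.exp (L / (2 * q))) Filter.atTop (nhds 4) := by
  have hapos : ∀ᶠ L in atTop, 0 < a L := ha.mono fun L h => h.1
  -- `a L / 2` tends to `0` within the punctured neighborhood
  have ha0' : Tendsto (fun L => a L / 2) atTop (nhdsWithin 0 {(0:ℝ)}ᶜ) := by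
    rw [tendsto_nhdsWithin_iff]
    refine ⟨by simpa using ha0.div_const 2, hapos.mono fun L h => ?_⟩
    have : (0:ℝ) < a L / 2 := by positivity
    simpa using this.ne'
  -- `(e^y - 1)/y → 1` as `y → 0`, `y ≠ 0`
  have hslope : Tendsto (fun y : ℝ => (Real.exp y - 1) / y)
      (nhdsWithin 0 {(0:ℝ)}ᶜ) (nhds 1) := by
    have h := hasDerivAt_iff_tendsto_slope.mp (Real.hasDerivAt_exp 0)
    simp only [Real.exp_zero] at h
    refine h.congr fun y => ?_
    simp [slope_def_field]
  have hinv : Tendsto (fun y : ℝ => y / (Real.exp y - 1))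
      (nhdsWithin 0 {(0:ℝ)}ᶜ) (nhds 1) := by
    have := hslope.inv₀ one_ne_zero
    simp only [inv_one] at this
    refine this.congr fun y => ?_
    rw [inv_div]
  have h2 : Tendsto (fun L => (a L / 2) / (Real.exp (a L / 2) - 1)) atTop (nhds 1) :=
    hinv.comp ha0'
  have h3 : Tendsto (fun L => a L / (Real.exp (a L / 2) - 1)) atTop (nhds 2) := by
    have := h2.const_mul 2
    simp only [mul_one] at this
    refine this.congr fun L => ?_
    ring
  have h4 : Tendsto (fun L => Real.exp (a L / 2) + 1) atTop (nhds 2) := by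
    have : Tendsto (fun L => Real.exp (a L / 2)) atTop (nhds 1) := by
      have := (Real.continuous_exp.tendsto 0).comp (show Tendsto (fun L => a L / 2) atTop (nhds 0) by simpa using ha0.div_const 2)
      simpa [Function.comp_def] using this
    have := this.add_const 1
    norm_num at this
    exact this
  set h : ℝ → ℝ := fun L => a L / (Real.exp (a L / 2) - 1) * (Real.exp (a L / 2) + 1)
    with hh
  have hprod : Tendsto h atTop (nhds 4) := by
    have := h3.mul h4
    norm_num at this
    exact this
  have hexp14 : Tendsto (fun L => Real.exp (a L / 4)) atTop (nhds 1) := by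
    have := (Real.continuous_exp.tendsto 0).comp (show Tendsto (fun L => a L / 4) atTop (nhds 0) by simpa using ha0.div_const 4)
    simpa [Function.comp_def] using this
  have hupper : Tendsto (fun L => h L * Real.exp (a L / 4)) atTop (nhds 4) := by
    have := hprod.mul hexp14
    norm_num at this
    exact this
  refine tendsto_of_tendsto_of_tendsto_of_le_of_le' hprod hupper ?_ ?_
  · -- lower bound
    filter_upwards [ha] with L ⟨hpos, hlo, _⟩
    have hE : (1:ℝ) < Real.exp (a L / 2) := by
      rw [show (1:ℝ) = Real.exp 0 from (Real.exp_zero).symm]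
      exact Real.exp_lt_exp.mpr (by positivity)
    have hEd : (0:ℝ) < Real.exp (a L / 2) - 1 := by linarith
    have hr : (0:ℝ) < (Real.exp (a L / 2) + 1) / (Real.exp (a L / 2) - 1) :=
      div_pos (by linarith) hEd
    have hRexp : Real.exp (collarRadius (a L) / 2)
        = (Real.exp (a L / 2) + 1) / (Real.exp (a L / 2) - 1) := by
      rw [collarRadius]
      rw [show 2 * Real.log ((Real.exp (a L / 2) + 1) / (Real.exp (a L / 2) - 1)) / 2
        = Real.log ((Real.exp (a L / 2) + 1) / (Real.exp (a L / 2) - 1)) by ring]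
      exact Real.exp_log hr
    have hle : collarRadius (a L) / 2 ≤ L / (2 * q) := by
      rw [div_le_div_iff₀ (by positivity) (by positivity)]
      nlinarith
    have : Real.exp (collarRadius (a L) / 2) ≤ Real.exp (L / (2 * q)) :=
      Real.exp_le_exp.mpr hle
    calc h L = a L * ((Real.exp (a L / 2) + 1) / (Real.exp (a L / 2) - 1)) := by
          rw [hh]; ring
      _ = a L * Real.exp (collarRadius (a L) / 2) := by rw [hRexp]
      _ ≤ a L * Real.exp (L / (2 * q)) := by
          exact mul_le_mul_of_nonneg_left this hpos.le
  · -- upper bound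
    filter_upwards [ha] with L ⟨hpos, _, hhi⟩
    have hE : (1:ℝ) < Real.exp (a L / 2) := by
      rw [show (1:ℝ) = Real.exp 0 from (Real.exp_zero).symm]
      exact Real.exp_lt_exp.mpr (by positivity)
    have hEd : (0:ℝ) < Real.exp (a L / 2) - 1 := by linarith
    have hr : (0:ℝ) < (Real.exp (a L / 2) + 1) / (Real.exp (a L / 2) - 1) :=
      div_pos (by linarith) hEd
    have hRexp : Real.exp (collarRadius (a L) / 2)
        = (Real.exp (a L / 2) + 1) / (Real.exp (a L / 2) - 1) := by
      rw [collarRadius]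
      rw [show 2 * Real.log ((Real.exp (a L / 2) + 1) / (Real.exp (a L / 2) - 1)) / 2
        = Real.log ((Real.exp (a L / 2) + 1) / (Real.exp (a L / 2) - 1)) by ring]
      exact Real.exp_log hr
    have hle : L / (2 * q) ≤ collarRadius (a L) / 2 + a L / 4 := by
      rw [div_le_iff₀ (by positivity : (0:ℝ) < 2 * q)]
      nlinarith
    have : Real.exp (L / (2 * q))
        ≤ Real.exp (collarRadius (a L) / 2) * Real.exp (a L / 4) := by
      rw [← Real.exp_add]
      exact Real.exp_le_exp.mpr hle
    calc a L * Real.exp (L / (2 * q))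
        ≤ a L * (Real.exp (collarRadius (a L) / 2) * Real.exp (a L / 4)) :=
          mul_le_mul_of_nonneg_left this hpos.le
      _ = h L * Real.exp (a L / 4) := by rw [hRexp, hh]; ring
end
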